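/- Let q = 2^e with e ≥ 1 and let F be the finite field with q² elements. Let a, c ∈ F with a ≠ 0 and c^q + c ≠ 0, and let I be the cardinality of {(x,y) ∈ F×F : x^(q+1) = y^q + y and y = a·x² + c}. If there exists z ∈ F with z^q = z and z² + z = a^(q+1) (i.e. the absolute trace of a^(q+1) from F_q to F_2 is 0), then I = q + 1; otherwise I = q − 1. -/

import Mathlib

open Finset Polynomial

lemma aux_pow_card_le (F : Type*) [Field F] [Fintype F] [DecidableEq F]
    {n : ℕ} (hn : 0 < n) (t : F) :
    (univ.filter (fun x : F => x ^ n = t)).card ≤ n := by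
  have hsub : (univ.filter (fun x : F => x ^ n = t)) ⊆ (nthRoots n t).toFinset := by
    intro x hx
    rw [Multiset.mem_toFinset, mem_nthRoots hn]
    exact (mem_filter.mp hx).2
  calc (univ.filter (fun x : F => x ^ n = t)).card
      ≤ (nthRoots n t).toFinset.card := Finset.card_le_card hsub
    _ ≤ Multiset.card (nthRoots n t) := Multiset.toFinset_card_le _
    _ ≤ n := Polynomial.card_nthRoots n t

lemma aux_roots_count (F : Type*) [Field F] [Fintype F] [DecidableEq F]
    {d : ℕ} (hd0 : 0 < d) (hd : d ∣ Fintype.card F - 1) :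
    (univ.filter (fun x : F => x ^ d = 1)).card = d := by
  have hcard : 1 < Fintype.card F := Fintype.one_lt_card
  obtain ⟨m, hm⟩ := hd
  have hm0 : 0 < m := by
    rcases Nat.eq_zero_or_pos m with h | h
    · subst h; simp at hm; omega
    · exact h
  have hle : (univ.filter (fun x : F => x ^ d = 1)).card ≤ d := aux_pow_card_le F hd0 1
  set S : Finset F := univ.filter (fun x : F => x ≠ 0) with hS
  have hScard : S.card = Fintype.card F - 1 := by
    rw [hS, Finset.filter_ne', Finset.card_erase_of_mem (Finset.mem_univ 0), Finset.card_univ]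
  have hmap : ∀ x ∈ S, x ^ m ∈ univ.filter (fun x : F => x ^ d = 1) := by
    intro x hx
    rw [mem_filter]
    refine ⟨Finset.mem_univ _, ?_⟩
    rw [← pow_mul, mul_comm, ← hm]
    exact FiniteField.pow_card_sub_one_eq_one x (by simpa [hS] using hx)
  have hfib := Finset.card_eq_sum_card_fiberwise hmap
  have hsum_le : ∑ t ∈ univ.filter (fun x : F => x ^ d = 1),
      (S.filter (fun x => x ^ m = t)).card ≤ (univ.filter (fun x : F => x ^ d = 1)).card * m := by
    refine Finset.sum_le_card_nsmul _ _ m ?_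
    intro t _
    calc (S.filter (fun x => x ^ m = t)).card
        ≤ (univ.filter (fun x : F => x ^ m = t)).card :=
          Finset.card_le_card (fun x hx => by
            rw [mem_filter]; exact ⟨Finset.mem_univ _, (mem_filter.mp hx).2⟩)
      _ ≤ m := aux_pow_card_le F hm0 t
  have : d * m ≤ (univ.filter (fun x : F => x ^ d = 1)).card * m := by
    calc d * m = Fintype.card F - 1 := hm.symm
      _ = S.card := hScard.symm
      _ = _ := hfib
      _ ≤ _ := hsum_le
  have hge : d ≤ (univ.filter (fun x : F => x ^ d = 1)).card :=
    Nat.le_of_mul_le_mul_right this hm0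
  omega

theorem stmt_12 (q : ℕ) (e : ℕ) (he : 1 ≤ e) (hqe : q = 2 ^ e)
    (F : Type*) [Field F] [Fintype F]
    (hF : Fintype.card F = q ^ 2) (a c : F) (ha : a ≠ 0) (hc : c ^ q + c ≠ 0) (I : ℕ)
    (hI : I = Set.ncard {p : F × F | p.1 ^ (q + 1) = p.2 ^ q + p.2 ∧
        p.2 = a * p.1 ^ 2 + c}) :
    ((∃ z : F, z ^ q = z ∧ z ^ 2 + z = a ^ (q + 1)) → I = q + 1) ∧
    ((¬ ∃ z : F, z ^ q = z ∧ z ^ 2 + z = a ^ (q + 1)) → I = q - 1) := by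
  classical
  have hq2 : 2 ≤ q := by
    rw [hqe]; calc 2 = 2^1 := rfl
    _ ≤ 2^e := Nat.pow_le_pow_right (by norm_num) he
  -- characteristic 2
  haveI : CharP F (ringChar F) := ringChar.charP F
  obtain ⟨n, hp, hcard⟩ := FiniteField.card F (ringChar F)
  have hchar2 : ringChar F = 2 := by
    have h2 : ringChar F ∣ 2 ^ (e * 2) := by
      have : (ringChar F) ^ (n : ℕ) = 2 ^ (e * 2) := by
        rw [← hcard, hF, hqe, ← pow_mul]
      exact this ▸ dvd_pow_self (ringChar F) n.ne_zero
    have := (Nat.Prime.dvd_of_dvd_pow (p := ringChar F) hp h2)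
    rwa [Nat.prime_dvd_prime_iff_eq hp Nat.prime_two] at this
  haveI hC2 : CharP F 2 := hchar2 ▸ ringChar.charP F
  haveI : Fact (Nat.Prime 2) := ⟨Nat.prime_two⟩
  -- frobenius additivity
  have hfrob : ∀ x y : F, (x + y) ^ q = x ^ q + y ^ q := by
    intro x y
    rw [hqe]
    exact add_pow_char_pow (x := x) (y := y) (p := 2) (n := e)
  have haddself : ∀ x : F, x + x = 0 := fun x => CharTwo.add_self_eq_zero x
  have hpowcard : ∀ x : F, (x ^ q) ^ q = x := by
    intro x
    rw [← pow_mul, ← sq, ← hF]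
    exact FiniteField.pow_card x
  have hsqinj : ∀ x y : F, x ^ 2 = y ^ 2 → x = y := by
    intro x y h
    have h2 : (x + y) ^ 2 = 0 := by
      rw [CharTwo.add_sq, h, haddself]
    have := pow_eq_zero_iff (n := 2) (by norm_num) |>.mp h2
    rw [eq_neg_of_add_eq_zero_left this, CharTwo.neg_eq]
  have hsqsurj : ∀ x : F, ∃ y : F, y ^ 2 = x := by
    intro x
    refine ⟨x ^ (2 ^ (2 * e - 1)), ?_⟩
    rw [← pow_mul, ← pow_succ]
    have : 2 * e - 1 + 1 = 2 * e := by omega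
    rw [this]
    have : x ^ (2 : ℕ) ^ (2 * e) = x ^ Fintype.card F := by
      rw [hF, hqe, ← pow_mul, mul_comm e 2]
    rw [this]
    exact FiniteField.pow_card x
  -- abbreviations
  set s : F := c ^ q + c with hs_def
  set b : F := a ^ (q + 1) with hb_def
  have hb0 : b ≠ 0 := pow_ne_zero _ ha
  have hsq : s ^ q = s := by
    rw [hs_def, hfrob, hpowcard, add_comm]
  have hbq : b ^ q = b := by
    rw [hb_def, pow_succ, mul_pow, hpowcard a, mul_comm, ← pow_succ]
  -- characteristic-2 rearrangement helper
  have hmove : ∀ u v : F, u = v ↔ u + v = 0 := by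
    intro u v
    rw [← sub_eq_zero (a := u) (b := v), CharTwo.sub_eq_add]
  -- the x-set
  set A : Finset F := univ.filter
    (fun x : F => x ^ (q+1) = (a * x ^ 2 + c) ^ q + (a * x ^ 2 + c)) with hA_def
  have htwo : (2 : F) = 0 := CharTwo.two_eq_zero
  have hIA : I = A.card := by
    have hinj : Function.Injective (fun x : F => (x, a * x ^ 2 + c)) := by
      intro x y h
      exact congrArg Prod.fst h
    have himg : {p : F × F | p.1 ^ (q + 1) = p.2 ^ q + p.2 ∧ p.2 = a * p.1 ^ 2 + c}
        = (fun x : F => (x, a * x ^ 2 + c)) ''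
          {x : F | x ^ (q+1) = (a * x ^ 2 + c) ^ q + (a * x ^ 2 + c)} := by
      ext ⟨x, y⟩
      simp only [Set.mem_setOf_eq, Set.mem_image, Prod.mk.injEq]
      constructor
      · rintro ⟨h1, rfl⟩
        exact ⟨x, h1, rfl, rfl⟩
      · rintro ⟨x', h, rfl, rfl⟩
        exact ⟨h, rfl⟩
    have hcoe : {x : F | x ^ (q+1) = (a * x ^ 2 + c) ^ q + (a * x ^ 2 + c)} = ↑A := by
      ext x
      simp [hA_def]
    rw [hI, himg, Set.ncard_image_of_injective _ hinj, hcoe, Set.ncard_coe_finset]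
  -- membership rephrasing
  have hAmem : ∀ x : F, x ∈ A ↔ x ^ (q+1) + a ^ q * (x ^ q) ^ 2 + a * x ^ 2 = s := by
    intro x
    rw [hA_def, mem_filter]
    simp only [Finset.mem_univ, true_and]
    have hexp : (a * x ^ 2 + c) ^ q = a ^ q * (x ^ q) ^ 2 + c ^ q := by
      rw [hfrob, mul_pow, ← pow_mul, mul_comm 2 q, pow_mul]
    rw [hexp]
    constructor
    · intro h
      linear_combination h - hs_def + (a ^ q * (x ^ q) ^ 2 + a * x ^ 2) * htwo
    · intro h
      linear_combination h + hs_def - (a ^ q * (x ^ q) ^ 2 + a * x ^ 2) * htwo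
  -- main bijection
  set U' : Finset F := univ.filter (fun u : F => u ^ (q+1) = b ∧ u ^ q + u ≠ 1) with hU'_def
  have hAx0 : ∀ x ∈ A, x ≠ 0 := by
    intro x hxA h0
    rw [hAmem, h0] at hxA
    rw [zero_pow (by omega : q + 1 ≠ 0), zero_pow (by omega : q ≠ 0)] at hxA
    rw [zero_pow (by norm_num : (2:ℕ) ≠ 0)] at hxA
    simp only [mul_zero, add_zero, zero_add] at hxA
    exact hc hxA.symm
  have hid1 : ∀ x : F, x ≠ 0 → x ^ (q+1) * (a * x * (x ^ q)⁻¹) = a * x ^ 2 := by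
    intro x hx
    have hxq : x ^ q ≠ 0 := pow_ne_zero _ hx
    field_simp
    ring
  have huq : ∀ x : F, (a * x * (x ^ q)⁻¹) ^ q = a ^ q * x ^ q * x⁻¹ := by
    intro x
    rw [mul_pow, mul_pow, inv_pow, hpowcard]
  have hid2 : ∀ x : F, x ≠ 0 → x ^ (q+1) * (a * x * (x ^ q)⁻¹) ^ q = a ^ q * (x ^ q) ^ 2 := by
    intro x hx
    rw [huq]
    field_simp
    ring
  have hid3 : ∀ x : F, x ≠ 0 → (a * x * (x ^ q)⁻¹) ^ (q + 1) = b := by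
    intro x hx
    have hxq : x ^ q ≠ 0 := pow_ne_zero _ hx
    rw [pow_succ, huq, hb_def]
    field_simp
    ring
  have hval : ∀ x ∈ A, s = x ^ (q+1) * ((a * x * (x ^ q)⁻¹) ^ q + (a * x * (x ^ q)⁻¹) + 1) := by
    intro x hxA
    have hx0 := hAx0 x hxA
    have hxmem := (hAmem x).mp hxA
    calc s = x ^ (q+1) + a ^ q * (x ^ q) ^ 2 + a * x ^ 2 := hxmem.symm
      _ = x ^ (q+1) * ((a * x * (x ^ q)⁻¹) ^ q + (a * x * (x ^ q)⁻¹) + 1) := by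
          rw [mul_add, mul_add, hid2 x hx0, hid1 x hx0, mul_one]
          ring
  have hAU' : A.card = U'.card := by
    refine Finset.card_bij (fun x _ => a * x * (x ^ q)⁻¹) ?_ ?_ ?_
    · -- maps to
      intro x hxA
      have hx0 := hAx0 x hxA
      rw [hU'_def, mem_filter]
      refine ⟨Finset.mem_univ _, hid3 x hx0, ?_⟩
      intro hcontra
      have hv := hval x hxA
      rw [hcontra] at hv
      rw [show (1 : F) + 1 = 0 from haddself 1, mul_zero] at hv
      exact hc hv
    · -- injective
      intro x1 hx1 x2 hx2 heq
      have hx10 := hAx0 x1 hx1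
      have hx20 := hAx0 x2 hx2
      have hxq1 : x1 ^ q ≠ 0 := pow_ne_zero _ hx10
      have hxq2 : x2 ^ q ≠ 0 := pow_ne_zero _ hx20
      have hv1 := hval x1 hx1
      have hv2 := hval x2 hx2
      rw [← heq] at hv2
      have hD : (a * x1 * (x1 ^ q)⁻¹) ^ q + (a * x1 * (x1 ^ q)⁻¹) + 1 ≠ 0 := by
        intro h
        rw [h, mul_zero] at hv1
        exact hc hv1
      have h5 : x1 ^ (q+1) = x2 ^ (q+1) :=
        mul_right_cancel₀ hD (hv1.symm.trans hv2)
      have heq' : x1 * x2 ^ q = x2 * x1 ^ q := by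
        have h := heq
        field_simp at h
        apply mul_left_cancel₀ ha
        linear_combination a * h
      have h6 : x1 ^ 2 * (x1 ^ q * x2 ^ q) = x2 ^ 2 * (x1 ^ q * x2 ^ q) := by
        linear_combination (x1 ^ (q+1)) * heq' + (x2 * x1 ^ q) * h5
      exact hsqinj x1 x2 (mul_right_cancel₀ (mul_ne_zero hxq1 hxq2) h6)
    · -- surjective
      intro u hu
      rw [hU'_def, mem_filter] at hu
      obtain ⟨-, hub, hutr⟩ := hu
      have hu0 : u ≠ 0 := by
        rintro rfl
        rw [zero_pow (by omega : q + 1 ≠ 0)] at hub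
        exact hb0 hub.symm
      have hD : (1 : F) + u + u ^ q ≠ 0 := by
        intro h
        apply hutr
        linear_combination h - htwo
      have hDq : ((1 : F) + u + u ^ q) ^ q = 1 + u + u ^ q := by
        rw [hfrob, hfrob, one_pow, hpowcard]
        ring
      have ht0 : s * (1 + u + u ^ q)⁻¹ ≠ 0 := mul_ne_zero hc (inv_ne_zero hD)
      set t : F := s * (1 + u + u ^ q)⁻¹ with ht_def
      have htq : t ^ q = t := by
        rw [ht_def, mul_pow, inv_pow, hDq, hsq]
      have htq1 : t ^ (q-1) = 1 := by
        have h1 : t ^ (q-1) * t = t ^ q := by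
          rw [← pow_succ]
          congr 1
          omega
        rw [htq] at h1
        have h2 : t ^ (q-1) * t = 1 * t := by rw [h1, one_mul]
        exact mul_right_cancel₀ ht0 h2
      obtain ⟨x, hx2⟩ := hsqsurj (t * u * a⁻¹)
      have hx0 : x ≠ 0 := by
        rintro rfl
        rw [zero_pow (by norm_num : (2:ℕ) ≠ 0)] at hx2
        exact (mul_ne_zero (mul_ne_zero ht0 hu0) (inv_ne_zero ha)) hx2.symm
      have hxq1' : x ^ (q-1) = a * u⁻¹ := by
        apply hsqinj
        rw [← pow_right_comm, hx2]
        rw [mul_pow, mul_pow, htq1, one_mul, inv_pow]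
        field_simp
        have hu2 : u ^ (q-1) * u ^ 2 = u ^ (q+1) := by
          rw [← pow_add]
          congr 1
          omega
        have ha2 : a ^ (q-1) * a ^ 2 = a ^ (q+1) := by
          rw [← pow_add]
          congr 1
          omega
        linear_combination hu2 - ha2 + hub + hb_def
      have hxq : x ^ q = a * u⁻¹ * x := by
        calc x ^ q = x ^ (q - 1) * x := by rw [← pow_succ]; congr 1; omega
          _ = a * u⁻¹ * x := by rw [hxq1']
      have hxq1ident : x ^ (q+1) = t := by
        have h1 : x ^ (q+1) = x ^ (q-1) * x ^ 2 := by
          rw [← pow_add]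
          congr 1
          omega
        rw [h1, hxq1', hx2]
        field_simp
      refine ⟨x, ?_, ?_⟩
      · -- x ∈ A
        rw [hAmem]
        have hA1 : a * x ^ 2 = t * u := by
          rw [hx2]
          field_simp
        have hA2 : a ^ q * (x ^ q) ^ 2 = t * u ^ q := by
          rw [hxq, mul_pow, hx2]
          have huq2 : u ^ q = u ^ (q+1) * u⁻¹ := by
            rw [pow_succ]
            field_simp
          rw [huq2, hub, hb_def]
          field_simp
          ring
        rw [hxq1ident, hA2, hA1]
        have hts : t * (1 + u + u ^ q) = s := by
          rw [ht_def]
          exact inv_mul_cancel_right₀ hD s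
        linear_combination hts
      · -- maps to u
        show a * x * (x ^ q)⁻¹ = u
        rw [hxq]
        field_simp
  set U : Finset F := univ.filter (fun u : F => u ^ (q+1) = b) with hU_def
  set W : Finset F := univ.filter (fun u : F => u ^ (q+1) = b ∧ u ^ q + u = 1) with hW_def
  have hsplit : W.card + U'.card = U.card := by
    have h1 : W = U.filter (fun u => u ^ q + u = 1) := by
      rw [hW_def, hU_def, Finset.filter_filter]
    have h2 : U' = U.filter (fun u => ¬ (u ^ q + u = 1)) := by
      rw [hU'_def, hU_def, Finset.filter_filter]
    rw [h1, h2]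
    exact Finset.card_filter_add_card_filter_not _
  have hqsq : q ^ 2 - 1 = (q + 1) * (q - 1) := by
    have h := Nat.sq_sub_sq q 1
    simpa using h
  have hUcard : U.card = q + 1 := by
    have hdvd : q + 1 ∣ Fintype.card F - 1 := by
      rw [hF, hqsq]
      exact Dvd.intro _ rfl
    have hcount := aux_roots_count F (d := q + 1) (by omega) hdvd
    rw [← hcount]
    refine Finset.card_bij' (fun u _ => u * a⁻¹) (fun v _ => v * a) ?_ ?_ ?_ ?_
    · intro u huU
      rw [hU_def, mem_filter] at huU
      rw [mem_filter]
      refine ⟨Finset.mem_univ _, ?_⟩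
      rw [mul_pow, inv_pow, huU.2, hb_def]
      exact mul_inv_cancel₀ (pow_ne_zero _ ha)
    · intro v hv
      rw [mem_filter] at hv
      rw [hU_def, mem_filter]
      refine ⟨Finset.mem_univ _, ?_⟩
      rw [mul_pow, hv.2, one_mul, hb_def]
    · intro u _
      exact inv_mul_cancel_right₀ ha u
    · intro v _
      exact mul_inv_cancel_right₀ ha v
  set K : Finset F := univ.filter (fun z : F => z ^ q = z) with hK_def
  have hKcard : K.card = q := by
    have hdvd : q - 1 ∣ Fintype.card F - 1 := by
      rw [hF, hqsq]
      exact Dvd.intro_left _ rfl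
    have hins : K = insert (0 : F) (univ.filter (fun z : F => z ^ (q-1) = 1)) := by
      ext z
      rw [hK_def, mem_filter, Finset.mem_insert, mem_filter]
      simp only [Finset.mem_univ, true_and]
      constructor
      · intro hz
        by_cases h0 : z = 0
        · exact Or.inl h0
        · right
          have h1 : z ^ (q-1) * z = 1 * z := by
            rw [one_mul, ← pow_succ]
            rw [show q - 1 + 1 = q by omega]
            exact hz
          exact mul_right_cancel₀ h0 h1
      · rintro (rfl | hz)
        · exact zero_pow (by omega)
        · calc z ^ q = z ^ (q - 1) * z := by rw [← pow_succ]; congr 1; omega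
            _ = z := by rw [hz, one_mul]
    have h0 : (0 : F) ∉ univ.filter (fun z : F => z ^ (q-1) = 1) := by
      rw [mem_filter]
      rintro ⟨-, h⟩
      rw [zero_pow (by omega : q - 1 ≠ 0)] at h
      exact zero_ne_one h
    rw [hins, Finset.card_insert_of_notMem h0, aux_roots_count F (by omega) hdvd]
    omega
  have hWeq : W = univ.filter (fun v : F => v ^ 2 + v = b ∧ v ^ q = v + 1) := by
    ext v
    rw [hW_def, mem_filter, mem_filter]
    simp only [Finset.mem_univ, true_and]
    constructor
    · rintro ⟨h1, h2⟩
      have hq' : v ^ q = v + 1 := by linear_combination h2 - v * htwo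
      exact ⟨by linear_combination h1 - v * hq', hq'⟩
    · rintro ⟨h1, h2⟩
      constructor
      · linear_combination v * h2 + h1
      · linear_combination h2 + v * htwo
  constructor
  · intro hz
    obtain ⟨z, hzq, hzb⟩ := hz
    have hW0 : W.card = 0 := by
      rw [hWeq, Finset.card_eq_zero, Finset.filter_eq_empty_iff]
      intro v _
      rintro ⟨h1, h2⟩
      have hfac : (v + z) * ((v + z) + 1) = 0 := by
        linear_combination h1 + hzb + (v * z + b) * htwo
      have hvq : v ^ q = v := by
        rcases mul_eq_zero.mp hfac with hcase | hcase
        · have hv : v = z := by linear_combination hcase - z * htwo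
          rw [hv, hzq]
        · have hv : v = z + 1 := by linear_combination hcase - (z + 1) * htwo
          rw [hv, hfrob, one_pow, hzq]
      exact one_ne_zero (show (1:F) = 0 by linear_combination hvq - h2)
    omega
  · intro hz
    have hW2 : W.card = 2 := by
      -- membership in K
      have hKmem : ∀ z : F, z ∈ K ↔ z ^ q = z := by
        intro z
        rw [hK_def, mem_filter]
        simp only [Finset.mem_univ, true_and]
      -- step 1 : get u₀ with u₀^q + u₀ = 1 (trace surjectivity)
      have hTK : ∀ y : F, y ^ q + y ∈ K := by
        intro y
        rw [hKmem, hfrob, hpowcard, add_comm]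
      obtain ⟨u₀, hu₀⟩ : ∃ u₀ : F, u₀ ^ q + u₀ = 1 := by
        set Timg : Finset F := univ.image (fun y : F => y ^ q + y) with hT_def
        have hTsub : Timg ⊆ K := by
          intro t ht
          rw [hT_def, Finset.mem_image] at ht
          obtain ⟨y, -, rfl⟩ := ht
          exact hTK y
        have hfib : ∀ t ∈ Timg, (univ.filter (fun y : F => y ^ q + y = t)).card = q := by
          intro t ht
          rw [hT_def, Finset.mem_image] at ht
          obtain ⟨y₀, -, rfl⟩ := ht
          refine Eq.trans ?_ hKcard
          refine Finset.card_bij' (fun y _ => y + y₀) (fun z _ => z + y₀) ?_ ?_ ?_ ?_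
          · intro y hy
            rw [mem_filter] at hy
            show y + y₀ ∈ K
            rw [hKmem, hfrob]
            linear_combination hy.2 + (y₀ ^ q - y) * htwo
          · intro z hzK
            show z + y₀ ∈ univ.filter (fun y : F => y ^ q + y = y₀ ^ q + y₀)
            rw [hKmem] at hzK
            rw [mem_filter]
            refine ⟨Finset.mem_univ _, ?_⟩
            rw [hfrob]
            linear_combination hzK + z * htwo
          · intro y _
            show y + y₀ + y₀ = y
            rw [add_assoc, haddself, add_zero]
          · intro z _
            show z + y₀ + y₀ = z
            rw [add_assoc, haddself, add_zero]
        have hcount : Fintype.card F = Timg.card * q := by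
          have h1 := Finset.card_eq_sum_card_fiberwise
            (f := fun y : F => y ^ q + y) (s := univ) (t := Timg)
            (fun y _ => by rw [hT_def]; exact Finset.mem_image.mpr ⟨y, Finset.mem_univ y, rfl⟩)
          rw [Finset.card_univ] at h1
          rw [h1, Finset.sum_congr rfl hfib, Finset.sum_const, smul_eq_mul]
        have hTcard : Timg.card = q := by
          have hq2' : q * q = Timg.card * q := by
            rw [← hcount, hF, sq]
          exact (Nat.eq_of_mul_eq_mul_right (by omega) hq2'.symm)
        have hTK' : Timg = K := Finset.eq_of_subset_of_card_le hTsub (by rw [hKcard, hTcard])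
        have h1K : (1 : F) ∈ K := by rw [hKmem, one_pow]
        rw [← hTK', hT_def, Finset.mem_image] at h1K
        obtain ⟨u₀, -, hu₀⟩ := h1K
        exact ⟨u₀, hu₀⟩
      have hu₀q : u₀ ^ q = u₀ + 1 := by linear_combination hu₀ - u₀ * htwo
      -- step 2 : the Artin-Schreier image P of K
      set P : Finset F := K.image (fun z : F => z ^ 2 + z) with hP_def
      have hPmem : ∀ t : F, t ∈ P ↔ ∃ z : F, z ^ q = z ∧ z ^ 2 + z = t := by
        intro t
        rw [hP_def, Finset.mem_image]
        constructor
        · rintro ⟨z, hzK, rfl⟩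
          exact ⟨z, (hKmem z).mp hzK, rfl⟩
        · rintro ⟨z, hzq, rfl⟩
          exact ⟨z, (hKmem z).mpr hzq, rfl⟩
      have hPsub : P ⊆ K := by
        intro t ht
        rw [hPmem] at ht
        obtain ⟨z, hzq, rfl⟩ := ht
        rw [hKmem, hfrob, pow_right_comm, hzq]
      have hfibP : ∀ t ∈ P, (K.filter (fun z => z ^ 2 + z = t)).card = 2 := by
        intro t ht
        rw [hPmem] at ht
        obtain ⟨z₀, hz₀q, rfl⟩ := ht
        have hset : K.filter (fun z => z ^ 2 + z = z₀ ^ 2 + z₀) = {z₀, z₀ + 1} := by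
          ext z
          rw [mem_filter, Finset.mem_insert, Finset.mem_singleton, hKmem]
          constructor
          · rintro ⟨hzq, hzeq⟩
            have hfac : (z + z₀) * ((z + z₀) + 1) = 0 := by
              linear_combination hzeq + (z * z₀ + z₀ ^ 2 + z₀) * htwo
            rcases mul_eq_zero.mp hfac with hcase | hcase
            · exact Or.inl (by linear_combination hcase - z₀ * htwo)
            · exact Or.inr (by linear_combination hcase - (z₀ + 1) * htwo)
          · rintro (rfl | rfl)
            · exact ⟨hz₀q, rfl⟩
            · refine ⟨by rw [hfrob, one_pow, hz₀q], ?_⟩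
              linear_combination (z₀ + 1) * htwo
        rw [hset]
        refine Finset.card_pair ?_
        intro h
        have : (0 : F) = 1 := by linear_combination h
        exact zero_ne_one this
      have hPcard : q = P.card * 2 := by
        have h1 := Finset.card_eq_sum_card_fiberwise
          (f := fun z : F => z ^ 2 + z) (s := K) (t := P)
          (fun z hzK => by rw [hP_def]; exact Finset.mem_image.mpr ⟨z, hzK, rfl⟩)
        rw [hKcard] at h1
        rw [h1, Finset.sum_congr rfl hfibP, Finset.sum_const, smul_eq_mul]
      -- step 3 : N = u₀^2+u₀ is in K but not in P
      have hNK : u₀ ^ 2 + u₀ ∈ K := by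
        rw [hKmem, hfrob, pow_right_comm, hu₀q]
        linear_combination (u₀ + 1) * htwo
      have hNP : u₀ ^ 2 + u₀ ∉ P := by
        intro h
        rw [hPmem] at h
        obtain ⟨z, hzq, hzeq⟩ := h
        have hfac : (u₀ + z) * ((u₀ + z) + 1) = 0 := by
          linear_combination hzeq + (u₀ * z + u₀ ^ 2 + u₀) * htwo
        have huq : u₀ ^ q = u₀ := by
          rcases mul_eq_zero.mp hfac with hcase | hcase
          · have hv : u₀ = z := by linear_combination hcase - z * htwo
            rw [hv, hzq]
          · have hv : u₀ = z + 1 := by linear_combination hcase - (z + 1) * htwo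
            rw [hv, hfrob, one_pow, hzq]
        exact one_ne_zero (show (1:F) = 0 by linear_combination huq - hu₀q)
      -- step 4 : b ∈ K, b ∉ P, so b + N ∈ P by the index-two argument
      have hbK : b ∈ K := (hKmem b).mpr hbq
      have hbP : b ∉ P := by
        intro h
        rw [hPmem] at h
        exact hz h
      have hKadd : ∀ x y : F, x ∈ K → y ∈ K → x + y ∈ K := by
        intro x y hx hy
        rw [hKmem] at hx hy ⊢
        rw [hfrob, hx, hy]
      have hPadd : ∀ x y : F, x ∈ P → y ∈ P → x + y ∈ P := by
        intro x y hx hy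
        rw [hPmem] at hx hy ⊢
        obtain ⟨z1, hz1, rfl⟩ := hx
        obtain ⟨z2, hz2, rfl⟩ := hy
        refine ⟨z1 + z2, by rw [hfrob, hz1, hz2], ?_⟩
        linear_combination (z1 * z2) * htwo
      have hkey : b + (u₀ ^ 2 + u₀) ∈ P := by
        set Pb : Finset F := P.image (fun t => t + b) with hPb_def
        have hPbK : Pb ⊆ K := by
          intro t ht
          rw [hPb_def, Finset.mem_image] at ht
          obtain ⟨p, hp, rfl⟩ := ht
          exact hKadd p b (hPsub hp) hbK
        have hdisj : Disjoint P Pb := by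
          rw [Finset.disjoint_left]
          intro p hp hpPb
          rw [hPb_def, Finset.mem_image] at hpPb
          obtain ⟨p', hp', hpeq⟩ := hpPb
          apply hbP
          have : p' + p ∈ P := hPadd p' p hp' hp
          have hb' : b = p' + p := by linear_combination hpeq - p' * htwo
          rwa [← hb'] at this
        have hPbcard : Pb.card = P.card := by
          rw [hPb_def]
          exact Finset.card_image_of_injective _ (add_left_injective b)
        have hunion : P ∪ Pb = K := by
          refine Finset.eq_of_subset_of_card_le (Finset.union_subset hPsub hPbK) ?_
          rw [Finset.card_union_of_disjoint hdisj, hPbcard, hKcard]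
          omega
        have hNun : u₀ ^ 2 + u₀ ∈ P ∪ Pb := by rw [hunion]; exact hNK
        rcases Finset.mem_union.mp hNun with h | h
        · exact absurd h hNP
        · rw [hPb_def, Finset.mem_image] at h
          obtain ⟨p, hp, hpeq⟩ := h
          have : b + (u₀ ^ 2 + u₀) = p := by linear_combination - hpeq + b * htwo
          rwa [this]
      -- step 5 : construct the root u of X² + X + b with u^q = u+1
      rw [hPmem] at hkey
      obtain ⟨lam, hlamq, hlam⟩ := hkey
      set u : F := u₀ + lam with hu_def
      have hu_b : u ^ 2 + u = b := by
        rw [hu_def]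
        linear_combination hlam + (u₀ * lam + u₀ ^ 2 + u₀) * htwo
      have hu_q : u ^ q = u + 1 := by
        rw [hu_def, hfrob, hu₀q, hlamq]
        ring
      -- step 6 : W = {u, u+1}
      rw [hWeq]
      have hset : univ.filter (fun v : F => v ^ 2 + v = b ∧ v ^ q = v + 1) = {u, u + 1} := by
        ext v
        rw [mem_filter, Finset.mem_insert, Finset.mem_singleton]
        simp only [Finset.mem_univ, true_and]
        constructor
        · rintro ⟨h1, h2⟩
          have hfac : (v + u) * ((v + u) + 1) = 0 := by
            linear_combination h1 - hu_b + (v * u + u ^ 2 + u) * htwo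
          rcases mul_eq_zero.mp hfac with hcase | hcase
          · exact Or.inl (by linear_combination hcase - u * htwo)
          · exact Or.inr (by linear_combination hcase - (u + 1) * htwo)
        · rintro (rfl | rfl)
          · exact ⟨hu_b, hu_q⟩
          · refine ⟨by linear_combination hu_b + (u + 1) * htwo, ?_⟩
            rw [hfrob, one_pow, hu_q]
        
      rw [hset]
      refine Finset.card_pair ?_
      intro h
      exact zero_ne_one (show (0:F) = 1 by linear_combination h)
    omega
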